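/- Let Y be a real topological vector space, A ⊆ Y and k ∈ Y \ {0}. Then the Gerstewitz functional φ_{A,k} is lower semicontinuous if and only if the set cl_k(A − {t·k : t ≥ 0}) is topologically closed. -/

import Mathlib

open Pointwise

/-- The `k`-directional closure of a set `A`. -/
def dirCl {Y : Type*} [AddCommGroup Y] [Module ℝ Y] (A : Set Y) (k : Y) : Set Y :=
  {y | ∀ l : ℝ, 0 < l → ∃ t : ℝ, 0 ≤ t ∧ t < l ∧ y - t • k ∈ A}

/-- The Gerstewitz functional `φ_{A,k}`. -/
noncomputable def gerst {Y : Type*} [AddCommGroup Y] [Module ℝ Y]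
    (A : Set Y) (k : Y) (y : Y) : EReal :=
  sInf (Real.toEReal '' {t : ℝ | y - t • k ∈ A})

lemma gerst_le_coe_iff {Y : Type*} [AddCommGroup Y] [Module ℝ Y]
    (A : Set Y) (k : Y) (y : Y) (r : ℝ) :
    gerst A k y ≤ (r : EReal) ↔ ∀ ε : ℝ, 0 < ε → ∃ t : ℝ, t < r + ε ∧ y - t • k ∈ A := by
  constructor
  · intro h ε hε
    have h1 : gerst A k y < ((r + ε : ℝ) : EReal) :=
      h.trans_lt (by exact_mod_cast (by linarith : r < r + ε))
    rw [gerst, sInf_lt_iff] at h1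
    obtain ⟨b, hb, hlt⟩ := h1
    obtain ⟨t, ht, rfl⟩ := hb
    exact ⟨t, by exact_mod_cast hlt, ht⟩
  · intro h
    by_contra hc
    push_neg at hc
    obtain ⟨z, hz1, hz2⟩ := (EReal.lt_iff_exists_real_btwn).1 hc
    have hrz : r < z := by exact_mod_cast hz1
    obtain ⟨t, ht1, ht2⟩ := h (z - r) (by linarith)
    have : sInf (Real.toEReal '' {t : ℝ | y - t • k ∈ A}) ≤ (t : EReal) :=
      sInf_le ⟨t, ht2, rfl⟩
    have htz : (t : EReal) < (z : EReal) := by exact_mod_cast (by linarith : t < z)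
    exact absurd (this.trans_lt htz) (not_lt.2 hz2.le)

lemma gerst_le_coe_iff_mem_dirCl {Y : Type*} [AddCommGroup Y] [Module ℝ Y]
    (A : Set Y) (k : Y) (y : Y) (r : ℝ) :
    gerst A k y ≤ (r : EReal) ↔
      y - r • k ∈ dirCl (A - {x : Y | ∃ t : ℝ, 0 ≤ t ∧ x = t • k}) k := by
  rw [gerst_le_coe_iff]
  constructor
  · intro h l hl
    obtain ⟨t, ht1, ht2⟩ := h l hl
    refine ⟨max (t - r) 0, le_max_right _ _, max_lt (by linarith) hl, ?_⟩
    refine ⟨y - t • k, ht2, (r + max (t - r) 0 - t) • k,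
      ⟨r + max (t - r) 0 - t, ?_, rfl⟩, ?_⟩
    · have := le_max_left (t - r) 0
      linarith
    · simp only [sub_smul, add_smul]
      abel
  · intro h ε hε
    obtain ⟨t0, ht0, ht0l, a, ha, x, ⟨s, hs, rfl⟩, heq⟩ := h ε hε
    refine ⟨r + t0 - s, by linarith, ?_⟩
    have : a = y - (r + t0 - s) • k := by
      have : a = y - r • k - t0 • k + s • k := eq_add_of_sub_eq heq
      rw [this]
      simp only [sub_smul, add_smul]
      abel
    rwa [← this]

lemma le_bot_iff_forall_le_coe (x : EReal) : x ≤ ⊥ ↔ ∀ r : ℝ, x ≤ (r : EReal) := by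
  constructor
  · intro h r; exact h.trans bot_le
  · intro h
    by_contra hc
    rw [le_bot_iff] at hc
    obtain ⟨z, hz1, hz2⟩ := (EReal.lt_iff_exists_real_btwn).1 (Ne.bot_lt hc)
    exact absurd (h z) (not_le.2 hz2)

theorem gerst_lsc_iff {Y : Type*} [AddCommGroup Y] [Module ℝ Y] [TopologicalSpace Y]
    [IsTopologicalAddGroup Y] [ContinuousSMul ℝ Y] (A : Set Y) (k : Y) (hk : k ≠ 0) :
    LowerSemicontinuous (gerst A k) ↔
      IsClosed (dirCl (A - {x : Y | ∃ t : ℝ, 0 ≤ t ∧ x = t • k}) k) := by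
  set B := A - {x : Y | ∃ t : ℝ, 0 ≤ t ∧ x = t • k} with hB
  have hpre : ∀ r : ℝ, gerst A k ⁻¹' Set.Iic ((r : EReal)) =
      (fun y => y - r • k) ⁻¹' dirCl B k := by
    intro r
    ext y
    simp only [Set.mem_preimage, Set.mem_Iic]
    exact gerst_le_coe_iff_mem_dirCl A k y r
  have hclosed : IsClosed (dirCl B k) → ∀ r : ℝ,
      IsClosed (gerst A k ⁻¹' Set.Iic ((r : EReal))) := by
    intro h r
    rw [hpre r]
    exact h.preimage (continuous_id.sub continuous_const)
  rw [lowerSemicontinuous_iff_isClosed_preimage]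
  constructor
  · intro h
    have h0 := h (0 : EReal)
    have : dirCl B k = gerst A k ⁻¹' Set.Iic ((0 : ℝ) : EReal) := by
      rw [hpre 0]
      ext y
      simp [zero_smul]
    rw [this]
    exact_mod_cast h0
  · intro h z
    induction z using EReal.rec with
    | bot =>
      have : gerst A k ⁻¹' Set.Iic ⊥ = ⋂ r : ℝ, gerst A k ⁻¹' Set.Iic ((r : EReal)) := by
        ext y
        simp only [Set.mem_preimage, Set.mem_Iic, Set.mem_iInter]
        exact le_bot_iff_forall_le_coe _
      rw [this]
      exact isClosed_iInter fun r => hclosed h r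
    | coe r => exact hclosed h r
    | top =>
      have : gerst A k ⁻¹' Set.Iic ⊤ = Set.univ := by
        ext y; simp
      rw [this]
      exact isClosed_univ
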